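/- Let (S, L) be a total abstract cubic and define x ≈ x' iff x ≈_i x' for some i. Then ≈ is an equivalence relation on S, it is admissible, and it is universal: for every admissible equivalence relation R on S and all x, x' ∈ S, x ≈ x' implies that x and x' are R-equivalent. -/

import Mathlib

/-- The approximating equivalence relations `≈_i` of §3: `≈_0` is equality, and `≈_{i+1}` is the
transitive closure of the relation `∼_{i+1}` (see `simR`). -/
def approxR {S : Type*} (L : S → S → S → Prop) : ℕ → S → S → Prop
  | 0 => Eq
  | i + 1 => Relation.TransGen (fun x x' => x = x' ∨ ∃ u v u' v' : S,
      approxR L i u u' ∧ approxR L i v v' ∧ L u v x ∧ L u' v' x')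

/-- The relations `∼_i` of §3: `∼_0` is equality, and `x ∼_{i+1} x'` iff `x = x'` or there are
`u ≈_i u'`, `v ≈_i v'` with `(u,v,x) ∈ L` and `(u',v',x') ∈ L`. -/
def simR {S : Type*} (L : S → S → S → Prop) : ℕ → S → S → Prop
  | 0 => Eq
  | i + 1 => fun x x' => x = x' ∨ ∃ u v u' v' : S,
      approxR L i u u' ∧ approxR L i v v' ∧ L u v x ∧ L u' v' x'

/-- An equivalence relation `r` on `S` is admissible if on `S/r` the induced collinearity
relation `L/r` (three classes are collinear iff they contain representatives forming a
collinear triple) defines a composition: for all classes `X, Y` there is a unique class `Z`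
with `(X,Y,Z) ∈ L/r`. -/
def AdmissibleRel {S : Type*} (L : S → S → S → Prop) (r : S → S → Prop) : Prop :=
  Equivalence r ∧
  ∀ x y : S, ∃ z : S,
    (∃ x' y' z' : S, r x x' ∧ r y y' ∧ r z z' ∧ L x' y' z') ∧
    ∀ w : S, (∃ x' y' w' : S, r x x' ∧ r y y' ∧ r w w' ∧ L x' y' w') → r z w

lemma approxR_mono {S : Type*} (L : S → S → S → Prop) :
    ∀ i x x', approxR L i x x' → approxR L (i+1) x x' := by
  intro i
  induction i with
  | zero => intro x x' h; exact Relation.TransGen.single (Or.inl h)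
  | succ i ih =>
      intro x x' h
      refine Relation.TransGen.mono ?_ _ _ h
      rintro a b (rfl | ⟨u, v, u', v', h1, h2, h3, h4⟩)
      · exact Or.inl rfl
      · exact Or.inr ⟨u, v, u', v', ih _ _ h1, ih _ _ h2, h3, h4⟩

lemma approxR_mono_le {S : Type*} (L : S → S → S → Prop) {i j : ℕ} (hij : i ≤ j) :
    ∀ x x', approxR L i x x' → approxR L j x x' := by
  induction j, hij using Nat.le_induction with
  | base => exact fun _ _ h => h
  | succ j _ ih => exact fun x x' h => approxR_mono L j x x' (ih x x' h)

lemma approxR_equiv {S : Type*} (L : S → S → S → Prop) (i : ℕ) :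
    Equivalence (approxR L i) := by
  induction i with
  | zero => exact eq_equivalence
  | succ i ih =>
      constructor
      · exact fun x => Relation.TransGen.single (Or.inl rfl)
      · have hs : Symmetric (fun x x' : S => x = x' ∨ ∃ u v u' v' : S,
            approxR L i u u' ∧ approxR L i v v' ∧ L u v x ∧ L u' v' x') := by
          rintro a b (rfl | ⟨u, v, u', v', h1, h2, h3, h4⟩)
          · exact Or.inl rfl
          · exact Or.inr ⟨u', v', u, v, ih.symm h1, ih.symm h2, h4, h3⟩
        intro a b h
        induction h with
        | single h => exact Relation.TransGen.single (hs h)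
        | tail _ h2 ih2 => exact Relation.TransGen.head (hs h2) ih2
      · exact fun h h' => h.trans h'

/-- for a total abstract cubic, the relation `x ≈ x' ⟺ ∃ i, x ≈_i x'` is an
equivalence relation, it is admissible, and it is universal: it is finer than every admissible
equivalence relation. -/
theorem stmt_8 {S : Type*} (L : S → S → S → Prop)
    (hsym₁ : ∀ x y z, L x y z → L y x z)
    (hsym₂ : ∀ x y z, L x y z → L x z y)
    (huniq : ∀ x y z z', L x y z → L x y z' → x ≠ y → z = z')
    (htotal : ∀ x y : S, ∃ z : S, L x y z) :
    Equivalence (fun x x' : S => ∃ i, approxR L i x x') ∧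
    AdmissibleRel L (fun x x' : S => ∃ i, approxR L i x x') ∧
    ∀ r : S → S → Prop, AdmissibleRel L r →
      ∀ x x' : S, (∃ i, approxR L i x x') → r x x' := by
  classical
  have refl0 : ∀ x : S, ∃ i, approxR L i x x := fun x => ⟨0, rfl⟩
  have hEquiv : Equivalence (fun x x' : S => ∃ i, approxR L i x x') := by
    constructor
    · exact refl0
    · rintro x y ⟨i, h⟩; exact ⟨i, (approxR_equiv L i).symm h⟩
    · rintro x y z ⟨i, h⟩ ⟨j, h'⟩
      exact ⟨max i j, (approxR_equiv L (max i j)).trans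
        (approxR_mono_le L (le_max_left i j) _ _ h)
        (approxR_mono_le L (le_max_right i j) _ _ h')⟩
  refine ⟨hEquiv, ⟨hEquiv, ?_⟩, ?_⟩
  · intro x y
    obtain ⟨z, hz⟩ := htotal x y
    refine ⟨z, ⟨x, y, z, refl0 x, refl0 y, refl0 z, hz⟩, ?_⟩
    rintro w ⟨x₁, y₁, w₁, ⟨i, hx⟩, ⟨j, hy⟩, ⟨k, hw⟩, hL⟩
    set m := max i j with hm
    have hx' : approxR L m x x₁ := approxR_mono_le L (le_max_left i j) _ _ hx
    have hy' : approxR L m y y₁ := approxR_mono_le L (le_max_right i j) _ _ hy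
    have hzw₁ : approxR L (m + 1) z w₁ :=
      Relation.TransGen.single (Or.inr ⟨x, y, x₁, y₁, hx', hy', hz, hL⟩)
    exact hEquiv.trans ⟨m + 1, hzw₁⟩ (hEquiv.symm ⟨k, hw⟩)
  · rintro r ⟨hrEquiv, hrAdm⟩ x x' ⟨i, h⟩
    induction i generalizing x x' with
    | zero => exact h ▸ hrEquiv.refl x
    | succ i ih =>
        have hsim : ∀ a b : S, (a = b ∨ ∃ u v u' v' : S,
            approxR L i u u' ∧ approxR L i v v' ∧ L u v a ∧ L u' v' b) → r a b := by
          rintro a b (rfl | ⟨u, v, u', v', h1, h2, h3, h4⟩)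
          · exact hrEquiv.refl a
          · obtain ⟨z, -, hzuniq⟩ := hrAdm u v
            have hza : r z a :=
              hzuniq a ⟨u, v, a, hrEquiv.refl u, hrEquiv.refl v, hrEquiv.refl a, h3⟩
            have hzb : r z b :=
              hzuniq b ⟨u', v', b, ih u u' h1, ih v v' h2, hrEquiv.refl b, h4⟩
            exact hrEquiv.trans (hrEquiv.symm hza) hzb
        induction h with
        | single hab => exact hsim _ _ hab
        | tail _ hbc ih2 => exact hrEquiv.trans ih2 (hsim _ _ hbc)
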